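/- Let ω : ℤ → A be periodic with least period n, and let S be a reduced forbidding system defining ω. Then every word in S has length at most n+1, and hence S is finite with |S| ≤ |A|^{n+1}·(n+1). -/

import Mathlib

def IsFactorL {A : Type*} (ω : ℤ → A) (u : List A) : Prop :=
  ∃ i : ℤ, ∀ j : Fin u.length, ω (i + j.1) = u.get j

def IsShift {A : Type*} (ω' ω : ℤ → A) : Prop :=
  ∃ c : ℤ, ω' = fun i => ω (i + c)

def IsLeastPeriod {A : Type*} (ω : ℤ → A) (n : ℕ) : Prop :=
  0 < n ∧ (∀ i, ω (i + n) = ω i) ∧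
    ∀ m : ℕ, 0 < m → (∀ i, ω (i + m) = ω i) → n ≤ m

def Defines {A : Type*} (S : Set (List A)) (ω : ℤ → A) : Prop :=
  (∀ s ∈ S, ¬ IsFactorL ω s) ∧
  ∀ ω' : ℤ → A, (∀ s ∈ S, ¬ IsFactorL ω' s) → IsShift ω' ω

def Reduced {A : Type*} (S : Set (List A)) (ω : ℤ → A) : Prop :=
  (∀ s ∈ S, ¬ IsFactorL ω s) ∧
  ∀ s ∈ S, ∀ t : List A, t <:+: s → t ≠ s → IsFactorL ω t

lemma aux_mul_period {A : Type*} (ω : ℤ → A) (n : ℕ)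
    (hp : ∀ i : ℤ, ω (i + n) = ω i) :
    ∀ (k : ℤ) (x : ℤ), ω (x + k * n) = ω x := by
  intro k
  induction k using Int.induction_on with
  | zero => simp
  | succ k ih =>
      intro x
      have : x + (k + 1) * n = (x + k * n) + n := by ring
      rw [this, hp, ih]
  | pred k ih =>
      intro x
      have h1 := hp (x + (-(k:ℤ) - 1) * n)
      have : x + (-(k:ℤ) - 1) * n + n = x + (-(k:ℤ)) * n := by ring
      rw [this] at h1
      exact h1.symm.trans (ih x)

lemma aux_window_ext {A : Type*} (ω : ℤ → A) (n : ℕ) (hn : 0 < n)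
    (hp : ∀ i : ℤ, ω (i + n) = ω i) (i j : ℤ)
    (h : ∀ t : ℕ, t < n → ω (i + t) = ω (j + t)) :
    ∀ t : ℤ, ω (i + t) = ω (j + t) := by
  intro t
  have hn' : (0:ℤ) < n := by exact_mod_cast hn
  have hr0 : 0 ≤ t % n := Int.emod_nonneg t (by omega)
  have hrn : t % n < n := Int.emod_lt_of_pos t hn'
  have ht : t = (t / n) * n + t % n := by
    rw [mul_comm]; exact (Int.mul_ediv_add_emod t n).symm
  obtain ⟨r, hr, hr2⟩ : ∃ r : ℕ, r < n ∧ (r : ℤ) = t % n := by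
    refine ⟨(t % n).toNat, ?_, ?_⟩ <;> omega
  have e1 : i + t = (i + r) + (t / n) * n := by rw [hr2]; omega
  have e2 : j + t = (j + r) + (t / n) * n := by rw [hr2]; omega
  rw [e1, e2, aux_mul_period ω n hp, aux_mul_period ω n hp]
  exact h r hr

lemma aux_glue {A : Type*} (ω : ℤ → A) (n : ℕ) (hn : 0 < n)
    (hp : ∀ i : ℤ, ω (i + n) = ω i) (u : List A)
    (hlen : n + 1 ≤ u.length)
    (hw : ∀ a : ℕ, (ha : a + (n + 1) ≤ u.length) →
      ∃ m : ℤ, ∀ j : ℕ, (hj : j ≤ n) → ω (m + j) = u[a + j]'(by omega)) :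
    IsFactorL ω u := by
  obtain ⟨i, hi⟩ := hw 0 (by omega)
  have key : ∀ k : ℕ, (hk : k < u.length) → ω (i + k) = u[k] := by
    intro k
    induction k using Nat.strong_induction_on with
    | _ k ih =>
      intro hk
      rcases le_or_gt k n with hkn | hkn
      · have := hi k hkn
        simpa using this
      · -- k ≥ n + 1; consider the window starting at k - n
        obtain ⟨m, hm⟩ := hw (k - n) (by omega)
        have hwin : ∀ t : ℕ, t < n → ω (m + t) = ω ((i + (k - n : ℕ)) + t) := by
          intro t ht
          have h1 := hm t (le_of_lt ht)
          have h2 := ih (k - n + t) (by omega) (by omega)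
          have e : (i + ((k - n : ℕ) : ℤ)) + t = i + ((k - n + t : ℕ) : ℤ) := by
            push_cast; ring
          rw [e, h2]
          convert h1 using 2
        have hext := aux_window_ext ω n hn hp m (i + (k - n : ℕ)) hwin (n : ℤ)
        have h3 := hm n le_rfl
        have e4 : (k - n + n : ℕ) = k := by omega
        have e5 : i + ((k - n : ℕ) : ℤ) + n = i + k := by
          have : ((k - n : ℕ) : ℤ) = (k : ℤ) - n := by omega
          rw [this]; ring
        rw [hext, e5] at h3
        rw [h3]
        congr 1
  exact ⟨i, fun j => by
    have := key j.1 j.2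
    simpa [List.get_eq_getElem] using this⟩

theorem stmt14 {A : Type*} [Fintype A] (ω : ℤ → A) (n : ℕ)
    (hper : IsLeastPeriod ω n) (S : Set (List A))
    (hdef : Defines S ω) (hred : Reduced S ω) :
    (∀ s ∈ S, s.length ≤ n + 1) ∧ S.Finite ∧
      S.ncard ≤ (Fintype.card A) ^ (n + 1) * (n + 1) := by
  obtain ⟨hn, hp, -⟩ := hper
  -- no element of S is empty
  have hne : ∀ s ∈ S, s ≠ [] := by
    intro s hs hcon
    apply hred.1 s hs
    subst hcon
    exact ⟨0, fun j => absurd j.2 (by simp)⟩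
  -- length bound
  have hlen : ∀ s ∈ S, s.length ≤ n + 1 := by
    intro s hs
    by_contra hcon
    push_neg at hcon
    have hslen : n + 2 ≤ s.length := hcon
    apply hred.1 s hs
    apply aux_glue ω n hn hp s (by omega)
    intro a ha
    -- the slice (s.drop a).take (n+1) is a proper infix of s
    set t : List A := (s.drop a).take (n + 1) with htdef
    have htlen : t.length = n + 1 := by
      simp [htdef]; omega
    have htinf : t <:+: s :=
      (List.take_prefix _ _).isInfix.trans (List.drop_suffix a s).isInfix
    have htne : t ≠ s := by
      intro h; rw [h] at htlen; omega
    obtain ⟨m, hm⟩ := hred.2 s hs t htinf htne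
    refine ⟨m, fun j hj => ?_⟩
    have hjlt : j < t.length := by omega
    have := hm ⟨j, hjlt⟩
    rw [this]
    have : t.get ⟨j, hjlt⟩ = s[a + j]'(by omega) := by
      simp [htdef, List.get_eq_getElem, List.getElem_take, List.getElem_drop]
    rw [this]
  refine ⟨hlen, ?_, ?_⟩
  all_goals {
    have hinj : Set.InjOn
        (fun l : List A => ((⟨min (l.length - 1) n, by omega⟩ : Fin (n+1)),
          fun i : Fin (n+1) => l.getD i.1 (ω 0))) S := by
      intro s hs t ht hst
      simp only [Prod.mk.injEq, Fin.mk.injEq] at hst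
      have hs1 : 1 ≤ s.length := List.length_pos_iff.mpr (hne s hs)
      have ht1 : 1 ≤ t.length := List.length_pos_iff.mpr (hne t ht)
      have hsn := hlen s hs
      have htn := hlen t ht
      have hlens : s.length = t.length := by
        have := hst.1
        rw [min_eq_left (by omega), min_eq_left (by omega)] at this
        omega
      apply List.ext_getElem hlens
      intro idx h1 h2
      have := congrFun hst.2 ⟨idx, by omega⟩
      simpa [List.getD_eq_getElem, h1, h2] using this
    first
    | exact Set.Finite.of_finite_image (Set.toFinite _) hinj
    | { have hcard := Set.ncard_le_ncard_of_injOn _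
          (fun a _ => Set.mem_univ _) hinj (Set.finite_univ)
        rw [Set.ncard_univ] at hcard
        simp only [Nat.card_eq_fintype_card] at hcard
        calc S.ncard ≤ Fintype.card (Fin (n+1) × (Fin (n+1) → A)) := hcard
          _ = Fintype.card A ^ (n + 1) * (n + 1) := by
              simp [Fintype.card_prod, Fintype.card_fun]; ring }
  }
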